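/- Let n ≥ 1 and let a_1, …, a_n ∈ [0,1] satisfy ∑_{k=1}^n a_k = 1. Then ∑_{k=1}^n a_k·log(e/a_k) ≤ 2·∑_{k=1}^n a_k·(1 + log k), where log is the natural logarithm and the summand a_k·log(e/a_k) is interpreted as 0 when a_k = 0. -/

import Mathlib

lemma sumsq_le (n : ℕ) : ∑ k ∈ Finset.Icc 1 n, (1:ℝ)/(2*(k:ℝ)^2) ≤ 1 := by
  have h : ∀ m : ℕ, 1 ≤ m → ∑ k ∈ Finset.Icc 1 m, (1:ℝ)/(k:ℝ)^2 ≤ 2 - 1/(m:ℝ) := by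
    intro m hm
    induction m with
    | zero => omega
    | succ p ih =>
      rcases Nat.eq_or_lt_of_le hm with h1 | h1
      · simp [← h1]
        norm_num
      · have hp : 1 ≤ p := by omega
        have := ih hp
        rw [Finset.sum_Icc_succ_top (by omega : 1 ≤ p + 1)]
        have hp0 : (0:ℝ) < (p:ℝ) := by positivity
        have hp1 : (0:ℝ) < (p:ℝ) + 1 := by positivity
        have key : (1:ℝ)/((p:ℝ)+1)^2 ≤ 1/(p:ℝ) - 1/((p:ℝ)+1) := by
          rw [div_sub_div _ _ (ne_of_gt hp0) (ne_of_gt hp1), div_le_div_iff₀ (by positivity) (by positivity)]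
          ring_nf
          nlinarith
        push_cast
        nlinarith
  rcases Nat.eq_zero_or_pos n with h0 | h0
  · simp [h0]
  · have := h n h0
    have h2 : ∑ k ∈ Finset.Icc 1 n, (1:ℝ)/(2*(k:ℝ)^2)
        = (1/2) * ∑ k ∈ Finset.Icc 1 n, (1:ℝ)/(k:ℝ)^2 := by
      rw [Finset.mul_sum]; apply Finset.sum_congr rfl; intro k _; ring
    have hn0 : (0:ℝ) < (n:ℝ) := by positivity
    have : (0:ℝ) < 1/(n:ℝ) := by positivity
    nlinarith

lemma pointwise (k : ℕ) (hk : 1 ≤ k) (x : ℝ) (hx : 0 ≤ x) :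
    x * Real.log (Real.exp 1 / x) ≤ 1/(2*(k:ℝ)^2) + x * (Real.log 2 + 2 * Real.log k) := by
  have hk0 : (0:ℝ) < (k:ℝ) := by exact_mod_cast hk
  have hlogk : 0 ≤ Real.log k := Real.log_nonneg (by exact_mod_cast hk)
  rcases eq_or_lt_of_le hx with h0 | h0
  · rw [← h0]
    simp [le_of_lt (show (0:ℝ) < 1/(2*(k:ℝ)^2) by positivity)]

  · set p : ℝ := 1/(2*(k:ℝ)^2) with hp
    have hpp : 0 < p := by positivity
    have hlogp : Real.log p = -(Real.log 2 + 2 * Real.log k) := by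
      rw [hp, Real.log_div one_ne_zero (by positivity), Real.log_mul (by norm_num) (by positivity),
        Real.log_pow]
      push_cast
      simp
    have h1 : Real.log (p/x) ≤ p/x - 1 := Real.log_le_sub_one_of_pos (by positivity)
    have h2 : x * Real.log (p/x) ≤ p - x := by
      have := mul_le_mul_of_nonneg_left h1 hx
      calc x * Real.log (p/x) ≤ x * (p/x - 1) := this
        _ = p - x := by field_simp
    rw [Real.log_div hpp.ne' (ne_of_gt h0), hlogp] at h2
    rw [Real.log_div (Real.exp_ne_zero 1) (ne_of_gt h0), Real.log_exp]
    nlinarith [h2]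

/-- Let `n ≥ 1` and `a_1, …, a_n ∈ [0,1]` satisfy `∑ a_k = 1`. Then
`∑ a_k · log(e/a_k) ≤ 2 · ∑ a_k · (1 + log k)`. (When `a_k = 0` the summand
`a_k · log(e/a_k)` is `0`, consistent with Lean's `Real.log 0 = 0`.) -/
theorem stmt0 (n : ℕ) (hn : 1 ≤ n) (a : ℕ → ℝ)
    (ha : ∀ k ∈ Finset.Icc 1 n, 0 ≤ a k ∧ a k ≤ 1)
    (hsum : ∑ k ∈ Finset.Icc 1 n, a k = 1) :
    ∑ k ∈ Finset.Icc 1 n, a k * Real.log (Real.exp 1 / a k)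
      ≤ 2 * ∑ k ∈ Finset.Icc 1 n, a k * (1 + Real.log k) := by
  have hstep : ∑ k ∈ Finset.Icc 1 n, a k * Real.log (Real.exp 1 / a k)
      ≤ ∑ k ∈ Finset.Icc 1 n, (1/(2*(k:ℝ)^2) + a k * (Real.log 2 + 2 * Real.log k)) := by
    apply Finset.sum_le_sum
    intro k hk
    have hk1 : 1 ≤ k := (Finset.mem_Icc.mp hk).1
    exact pointwise k hk1 (a k) (ha k hk).1
  have hsplit : ∑ k ∈ Finset.Icc 1 n, (1/(2*(k:ℝ)^2) + a k * (Real.log 2 + 2 * Real.log k))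
      = (∑ k ∈ Finset.Icc 1 n, (1:ℝ)/(2*(k:ℝ)^2)) + Real.log 2 * (∑ k ∈ Finset.Icc 1 n, a k)
        + 2 * ∑ k ∈ Finset.Icc 1 n, a k * Real.log k := by
    rw [Finset.sum_add_distrib, add_assoc]
    congr 1
    rw [Finset.mul_sum, Finset.mul_sum, ← Finset.sum_add_distrib]
    exact Finset.sum_congr rfl (fun k _ => by ring)
  have hrhs : 2 * ∑ k ∈ Finset.Icc 1 n, a k * (1 + Real.log k)
      = 2 * (∑ k ∈ Finset.Icc 1 n, a k) + 2 * ∑ k ∈ Finset.Icc 1 n, a k * Real.log k := by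
    rw [← mul_add, ← Finset.sum_add_distrib]
    congr 1
    apply Finset.sum_congr rfl
    intro k _; ring
  have hlog2 : Real.log 2 ≤ 1 := by
    have := Real.log_le_sub_one_of_pos (by norm_num : (0:ℝ) < 2)
    linarith
  have hs := sumsq_le n
  rw [hrhs]
  rw [hsplit, hsum] at hstep
  linarith
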